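/- For all n ≥ 1, q(n) = p(p(n)) + 1. -/
import Mathlib


/-- Wythoff sequences: `p 1 = 1`, `q n = p n + n` for `n ≥ 1`, and `p (n+1)` is the
smallest positive integer not contained in `U_n = {p 1, …, p n, q 1, …, q n}`. -/

theorem stmt_6 (p q : ℕ → ℕ)
    (hp1 : p 1 = 1)
    (hq : ∀ n, 1 ≤ n → q n = p n + n)
    (hmin : ∀ n, 1 ≤ n →
      IsLeast {m : ℕ | 0 < m ∧ ∀ i, 1 ≤ i → i ≤ n → m ≠ p i ∧ m ≠ q i} (p (n + 1))) :
    ∀ n, 1 ≤ n → q n = p (p n) + 1 := by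
  -- positivity
  have hpos : ∀ n, 1 ≤ n → 0 < p n := by
    intro n hn
    rcases Nat.exists_eq_add_of_le hn with ⟨k, rfl⟩
    cases k with
    | zero => simp [hp1]
    | succ k =>
      have := (hmin (1 + k) (by omega)).1.1
      simpa [Nat.add_comm] using this
  -- one-step strict increase
  have hstep : ∀ n, 1 ≤ n → p n < p (n + 1) := by
    intro n hn
    have hmem := (hmin n hn).1
    have hne : p (n + 1) ≠ p n := (hmem.2 n hn le_rfl).1
    rcases Nat.lt_or_ge n 2 with h2 | h2
    · interval_cases n
      have h0 : 0 < p (1 + 1) := hmem.1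
      rw [hp1] at hne ⊢
      omega
    · -- p (n+1) belongs to the set at level n-1, whose least element is p n
      have hn1 : 1 ≤ n - 1 := by omega
      have hle := (hmin (n - 1) hn1).2
      have : p ((n - 1) + 1) ≤ p (n + 1) := by
        apply hle
        refine ⟨hmem.1, fun i hi1 hi2 => hmem.2 i hi1 (by omega)⟩
      have hrw : (n - 1) + 1 = n := by omega
      rw [hrw] at this
      omega
  -- strict monotonicity
  have hlt : ∀ a b, 1 ≤ a → a < b → p a < p b := by
    intro a b ha hab
    induction b, hab using Nat.le_induction with
    | base => exact hstep a ha
    | succ b hb ih => exact ih.trans (hstep b (by omega))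
  have hge : ∀ n, 1 ≤ n → n ≤ p n := by
    intro n hn
    induction n with
    | zero => omega
    | succ k ih =>
      rcases Nat.eq_or_lt_of_le hn with h | h
      · simp [← h, hp1]
      · have hk : 1 ≤ k := by omega
        have := hstep k hk
        have := ih hk
        omega
  -- q strict / gap facts
  have hqmono : ∀ a b, 1 ≤ a → a ≤ b → q a ≤ q b := by
    intro a b ha hab
    rcases Nat.eq_or_lt_of_le hab with h | h
    · rw [h]
    · rw [hq a ha, hq b (by omega)]
      have := hlt a b ha h
      omega
  have hqgap : ∀ n, 1 ≤ n → q n + 2 ≤ q (n + 1) := by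
    intro n hn
    rw [hq n hn, hq (n + 1) (by omega)]
    have := hstep n hn
    omega
  -- completeness: every m ≥ 1 is a p-value or q-value with index in [1, m]
  have hcomp : ∀ m, 1 ≤ m → ∃ i, 1 ≤ i ∧ i ≤ m ∧ (m = p i ∨ m = q i) := by
    intro m hm
    by_contra hcon
    push_neg at hcon
    have hmem : m ∈ {x : ℕ | 0 < x ∧ ∀ i, 1 ≤ i → i ≤ m → x ≠ p i ∧ x ≠ q i} := by
      refine ⟨hm, fun i hi1 hi2 => ?_⟩
      exact hcon i hi1 hi2
    have hle := (hmin m hm).2 hmem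
    have h1 : m + 1 ≤ p (m + 1) := hge (m + 1) (by omega)
    omega
  -- disjointness: p-values never equal q-values
  have hdisj : ∀ i j, 1 ≤ i → 1 ≤ j → p i ≠ q j := by
    intro i j hi hj
    rcases le_or_gt i j with h | h
    · have h1 : p i ≤ p j := by
        rcases Nat.eq_or_lt_of_le h with h' | h'
        · rw [h']
        · exact (hlt i j hi h').le
      rw [hq j hj]; omega
    · -- i ≥ j + 1, so i = (i-1)+1 with i-1 ≥ j ≥ 1
      have hi1 : 1 ≤ i - 1 := by omega
      have := ((hmin (i - 1) hi1).1.2 j hj (by omega)).2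
      have hrw : (i - 1) + 1 = i := by omega
      rwa [hrw] at this
  -- main counting argument
  intro n hn
  set N := p n + n - 1 with hN
  have hpn1 : 1 ≤ p n := hpos n hn
  have hN1 : 1 ≤ N := by omega
  have hqn : q n = N + 1 := by rw [hq n hn]; omega
  -- N is a p-value
  have hNp : ∃ t, 1 ≤ t ∧ p t = N := by
    rcases hcomp N hN1 with ⟨i, hi1, hi2, hpi | hqi⟩
    · exact ⟨i, hi1, hpi.symm⟩
    · exfalso
      have hin : i < n := by
        by_contra h
        push_neg at h
        have := hqmono n i hn h
        omega
      have hn2 : 2 ≤ n := by omega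
      have h1 : q i ≤ q (n - 1) := hqmono i (n - 1) hi1 (by omega)
      have h2 : q (n - 1) + 2 ≤ q ((n - 1) + 1) := hqgap (n - 1) (by omega)
      have hrw : (n - 1) + 1 = n := by omega
      rw [hrw] at h2
      omega
  obtain ⟨t, ht1, htN⟩ := hNp
  -- the counting
  have hcard : N = t + (n - 1) := by
    have hA : ∀ k, 1 ≤ k → (p k ≤ N ↔ k ≤ t) := by
      intro k hk
      constructor
      · intro h
        by_contra hc
        push_neg at hc
        have := hlt t k ht1 hc
        omega
      · intro h
        rcases Nat.eq_or_lt_of_le h with h' | h'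
        · rw [h', htN]
        · have := hlt k t hk h'
          omega
    have hB : ∀ k, 1 ≤ k → (q k ≤ N ↔ k ≤ n - 1) := by
      intro k hk
      constructor
      · intro h
        have hkn : k < n := by
          by_contra hc
          push_neg at hc
          have := hqmono n k hn hc
          omega
        omega
      · intro h
        have hn2 : 2 ≤ n := by omega
        have h1 : q k ≤ q (n - 1) := hqmono k (n - 1) hk h
        have h2 : q (n - 1) + 2 ≤ q ((n - 1) + 1) := hqgap (n - 1) (by omega)
        have hrw : (n - 1) + 1 = n := by omega
        rw [hrw] at h2
        omega
    have hsetA : Finset.Icc 1 N = (Finset.Icc 1 t).image p ∪ (Finset.Icc 1 (n - 1)).image q := by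
      ext m
      simp only [Finset.mem_union, Finset.mem_image, Finset.mem_Icc]
      constructor
      · rintro ⟨hm1, hm2⟩
        rcases hcomp m hm1 with ⟨i, hi1, hi2, hpi | hqi⟩
        · exact Or.inl ⟨i, ⟨hi1, (hA i hi1).1 (by omega)⟩, hpi.symm⟩
        · exact Or.inr ⟨i, ⟨hi1, (hB i hi1).1 (by omega)⟩, hqi.symm⟩
      · rintro (⟨k, ⟨hk1, hk2⟩, rfl⟩ | ⟨k, ⟨hk1, hk2⟩, rfl⟩)
        · exact ⟨hpos k hk1, (hA k hk1).2 hk2⟩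
        · refine ⟨?_, (hB k hk1).2 hk2⟩
          rw [hq k hk1]; omega
    have hdisjf : Disjoint ((Finset.Icc 1 t).image p) ((Finset.Icc 1 (n - 1)).image q) := by
      rw [Finset.disjoint_left]
      rintro m hmp hmq
      simp only [Finset.mem_image, Finset.mem_Icc] at hmp hmq
      obtain ⟨i, ⟨hi1, _⟩, hip⟩ := hmp
      obtain ⟨j, ⟨hj1, _⟩, hjq⟩ := hmq
      exact hdisj i j hi1 hj1 (hip.trans hjq.symm)
    have hcardA : ((Finset.Icc 1 t).image p).card = t := by
      rw [Finset.card_image_of_injOn, Nat.card_Icc]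
      · omega
      · intro a ha b hb hab
        simp only [Finset.coe_Icc, Set.mem_Icc] at ha hb
        by_contra hne
        rcases Nat.lt_or_ge a b with h | h
        · have := hlt a b ha.1 h; omega
        · have := hlt b a hb.1 (by omega); omega
    have hcardB : ((Finset.Icc 1 (n - 1)).image q).card = n - 1 := by
      rw [Finset.card_image_of_injOn, Nat.card_Icc]
      · omega
      · intro a ha b hb hab
        simp only [Finset.coe_Icc, Set.mem_Icc] at ha hb
        by_contra hne
        rcases Nat.lt_or_ge a b with h | h
        · have := hqmono a b ha.1 h.le
          rw [hq a ha.1, hq b hb.1] at hab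
          have := hlt a b ha.1 h
          omega
        · have h' : b < a := by omega
          rw [hq a ha.1, hq b hb.1] at hab
          have := hlt b a hb.1 h'
          omega
    have := Finset.card_union_of_disjoint hdisjf
    rw [← hsetA, Nat.card_Icc, hcardA, hcardB] at this
    omega
  have htpn : t = p n := by omega
  rw [hqn, ← htN, htpn]
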